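/- Define f_J : ℝ → ℝ by f_J(J) = (3/2)·(1 − (4/π)·arccos(|J|/√(1 − J²))) for 1/√3 ≤ |J| < 1/√2, f_J(J) = 3/2 for 1/√2 ≤ |J| ≤ 1, and f_J(J) = 0 otherwise. Then f_J is nonnegative and ∫_{−∞}^{∞} f_J(J) dJ = 1; that is, f_J is a probability density function on ℝ. -/

import Mathlib

open MeasureTheory

/-- The density of the alignment factor `J` in the stochastic misalignment
model for MI links. -/
noncomputable def alignmentPDF (J : ℝ) : ℝ :=
  if 1 / Real.sqrt 3 ≤ |J| ∧ |J| < 1 / Real.sqrt 2 then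
    (3 / 2) * (1 - (4 / Real.pi) * Real.arccos (|J| / Real.sqrt (1 - J ^ 2)))
  else if 1 / Real.sqrt 2 ≤ |J| ∧ |J| ≤ 1 then 3 / 2
  else 0

/-! ### Auxiliary material -/

/-- Antiderivative of the nontrivial branch of the density. -/
noncomputable def antiF (J : ℝ) : ℝ :=
  (3 / 2) * (J - (4 / Real.pi) *
    (J * Real.arccos (J / Real.sqrt (1 - J ^ 2)) - Real.arctan (Real.sqrt (1 - 2 * J ^ 2))))

lemma hasDerivAt_antiF {J : ℝ} (h2 : J ^ 2 < 1 / 2) :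
    HasDerivAt antiF
      ((3 / 2) * (1 - (4 / Real.pi) * Real.arccos (J / Real.sqrt (1 - J ^ 2)))) J := by
  have hs2 : Real.sqrt (1 - J ^ 2) ^ 2 = 1 - J ^ 2 := Real.sq_sqrt (by nlinarith)
  have hs0 : 0 < Real.sqrt (1 - J ^ 2) := Real.sqrt_pos.2 (by nlinarith)
  have hv2 : Real.sqrt (1 - 2 * J ^ 2) ^ 2 = 1 - 2 * J ^ 2 := Real.sq_sqrt (by nlinarith)
  have hv0 : 0 < Real.sqrt (1 - 2 * J ^ 2) := Real.sqrt_pos.2 (by nlinarith)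
  set s := Real.sqrt (1 - J ^ 2) with hs
  set v := Real.sqrt (1 - 2 * J ^ 2) with hv
  have hinner : HasDerivAt (fun x : ℝ => 1 - x ^ 2) (-(2 * J)) J := by
    simpa using ((hasDerivAt_pow 2 J).const_sub 1)
  have hsqrt : HasDerivAt (fun x : ℝ => Real.sqrt (1 - x ^ 2))
      (1 / (2 * s) * -(2 * J)) J :=
    (Real.hasDerivAt_sqrt (by nlinarith)).comp J hinner
  have hu : HasDerivAt (fun x : ℝ => x / Real.sqrt (1 - x ^ 2))
      ((1 * s - J * (1 / (2 * s) * -(2 * J))) / s ^ 2) J :=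
    (hasDerivAt_id J).div hsqrt hs0.ne'
  have hu2 : (J / s) ^ 2 < 1 := by
    rw [div_pow, hs2, div_lt_one (by nlinarith)]; nlinarith
  have hune1 : J / s ≠ 1 := by intro h; rw [h] at hu2; norm_num at hu2
  have hunem1 : J / s ≠ -1 := by intro h; rw [h] at hu2; norm_num at hu2
  have hsqu : Real.sqrt (1 - (J / s) ^ 2) = v / s := by
    rw [div_pow, hs2]
    have hne : (1:ℝ) - J ^ 2 ≠ 0 := by nlinarith
    have : 1 - J ^ 2 / (1 - J ^ 2) = (1 - 2 * J ^ 2) / (1 - J ^ 2) := by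
      rw [eq_div_iff hne, sub_mul, div_mul_cancel₀ _ hne]; ring
    rw [this, Real.sqrt_div (by nlinarith), hs]
  have harccos : HasDerivAt (fun x : ℝ => Real.arccos (x / Real.sqrt (1 - x ^ 2)))
      (-(1 / (v / s)) * ((1 * s - J * (1 / (2 * s) * -(2 * J))) / s ^ 2)) J := by
    have := (Real.hasDerivAt_arccos hunem1 hune1).comp J hu
    rwa [hsqu] at this
  have hmul : HasDerivAt (fun x : ℝ => x * Real.arccos (x / Real.sqrt (1 - x ^ 2)))
      (1 * Real.arccos (J / s) +
        J * (-(1 / (v / s)) * ((1 * s - J * (1 / (2 * s) * -(2 * J))) / s ^ 2))) J :=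
    (hasDerivAt_id J).mul harccos
  have hinner2 : HasDerivAt (fun x : ℝ => 1 - 2 * x ^ 2) (-(2 * (2 * J))) J := by
    have := ((hasDerivAt_pow 2 J).const_mul 2).const_sub 1
    simpa using this
  have hvd : HasDerivAt (fun x : ℝ => Real.sqrt (1 - 2 * x ^ 2))
      (1 / (2 * v) * -(2 * (2 * J))) J :=
    (Real.hasDerivAt_sqrt (by nlinarith)).comp J hinner2
  have harctan : HasDerivAt (fun x : ℝ => Real.arctan (Real.sqrt (1 - 2 * x ^ 2)))
      (1 / (1 + v ^ 2) * (1 / (2 * v) * -(2 * (2 * J)))) J :=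
    by have := (Real.hasDerivAt_arctan v).comp J hvd; exact this
  have hJX : J * (-(1 / (v / s)) * ((1 * s - J * (1 / (2 * s) * -(2 * J))) / s ^ 2)) =
      1 / (1 + v ^ 2) * (1 / (2 * v) * -(2 * (2 * J))) := by
    have h1v : 1 + v ^ 2 = 2 * (1 - J ^ 2) := by rw [hv2]; ring
    have hne : (1:ℝ) - J ^ 2 ≠ 0 := by nlinarith
    rw [h1v]
    field_simp
    linear_combination (J ^ 3) * hs2
  have hT : 1 * Real.arccos (J / s) + J * (-(1 / (v / s)) *
      ((1 * s - J * (1 / (2 * s) * -(2 * J))) / s ^ 2)) -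
      1 / (1 + v ^ 2) * (1 / (2 * v) * -(2 * (2 * J))) = Real.arccos (J / s) := by
    rw [hJX]; ring
  have hbig : HasDerivAt antiF
      ((3 / 2) * (1 - (4 / Real.pi) *
        ((1 * Real.arccos (J / s) +
          J * (-(1 / (v / s)) * ((1 * s - J * (1 / (2 * s) * -(2 * J))) / s ^ 2))) -
          1 / (1 + v ^ 2) * (1 / (2 * v) * -(2 * (2 * J)))))) J := by
    unfold antiF
    exact ((hasDerivAt_id' J).sub ((hmul.sub harctan).const_mul (4 / Real.pi))).const_mul (3 / 2)
  rw [hT] at hbig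
  exact hbig

lemma sqrt3_pos : (0:ℝ) < Real.sqrt 3 := Real.sqrt_pos.2 (by norm_num)
lemma sqrt2_pos : (0:ℝ) < Real.sqrt 2 := Real.sqrt_pos.2 (by norm_num)

lemma inv_sqrt3_sq : (1 / Real.sqrt 3 : ℝ) ^ 2 = 1 / 3 := by
  rw [div_pow, one_pow, Real.sq_sqrt (by norm_num : (0:ℝ) ≤ 3)]

lemma inv_sqrt2_sq : (1 / Real.sqrt 2 : ℝ) ^ 2 = 1 / 2 := by
  rw [div_pow, one_pow, Real.sq_sqrt (by norm_num : (0:ℝ) ≤ 2)]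

lemma inv_sqrt3_pos : (0:ℝ) < 1 / Real.sqrt 3 := by positivity

lemma sqrt2_lt_sqrt3 : Real.sqrt 2 < Real.sqrt 3 :=
  Real.sqrt_lt_sqrt (by norm_num) (by norm_num)

lemma inv_sqrt3_lt_inv_sqrt2 : (1 / Real.sqrt 3 : ℝ) < 1 / Real.sqrt 2 :=
  one_div_lt_one_div_of_lt sqrt2_pos sqrt2_lt_sqrt3

lemma one_le_sqrt2 : (1:ℝ) ≤ Real.sqrt 2 := by
  rw [show (1:ℝ) = Real.sqrt 1 from Real.sqrt_one.symm]
  exact Real.sqrt_le_sqrt (by norm_num)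

lemma inv_sqrt2_le_one : (1 / Real.sqrt 2 : ℝ) ≤ 1 :=
  (div_le_one sqrt2_pos).2 one_le_sqrt2

lemma ratio_at_a :
    (1 / Real.sqrt 3) / Real.sqrt (1 - (1 / Real.sqrt 3) ^ 2) = Real.sqrt 2 / 2 := by
  rw [inv_sqrt3_sq, show (1:ℝ) - 1 / 3 = 2 / 3 by norm_num,
    Real.sqrt_div (by norm_num : (0:ℝ) ≤ 2) 3]
  have h2 : Real.sqrt 2 * Real.sqrt 2 = 2 := Real.mul_self_sqrt (by norm_num)
  have h3 : Real.sqrt 3 ≠ 0 := sqrt3_pos.ne'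
  have h2' : Real.sqrt 2 ≠ 0 := sqrt2_pos.ne'
  field_simp
  rw [Real.sq_sqrt (by norm_num : (0:ℝ) ≤ 2)]

lemma arccos_sqrt2_div_two : Real.arccos (Real.sqrt 2 / 2) = Real.pi / 4 := by
  rw [← Real.cos_pi_div_four]
  exact Real.arccos_cos (by positivity) (by linarith [Real.pi_pos])

lemma v_at_a : Real.sqrt (1 - 2 * (1 / Real.sqrt 3) ^ 2) = 1 / Real.sqrt 3 := by
  rw [inv_sqrt3_sq, show (1:ℝ) - 2 * (1 / 3) = 3⁻¹ by norm_num, Real.sqrt_inv, one_div]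

lemma arctan_inv_sqrt3 : Real.arctan (1 / Real.sqrt 3) = Real.pi / 6 :=
  Real.arctan_eq_of_tan_eq Real.tan_pi_div_six
    ⟨by linarith [Real.pi_pos], by linarith [Real.pi_pos]⟩

lemma ratio_at_b :
    (1 / Real.sqrt 2) / Real.sqrt (1 - (1 / Real.sqrt 2) ^ 2) = 1 := by
  rw [inv_sqrt2_sq, show (1:ℝ) - 1 / 2 = 2⁻¹ by norm_num, Real.sqrt_inv, one_div]
  field_simp

lemma v_at_b : Real.sqrt (1 - 2 * (1 / Real.sqrt 2) ^ 2) = 0 := by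
  rw [inv_sqrt2_sq]
  norm_num

lemma antiF_at_a : antiF (1 / Real.sqrt 3) = 1 := by
  unfold antiF
  rw [ratio_at_a, arccos_sqrt2_div_two, v_at_a, arctan_inv_sqrt3]
  have hπ : Real.pi ≠ 0 := Real.pi_ne_zero
  field_simp
  ring

lemma antiF_at_b : antiF (1 / Real.sqrt 2) = (3 / 2) * (1 / Real.sqrt 2) := by
  unfold antiF
  rw [ratio_at_b, Real.arccos_one, v_at_b, Real.arctan_zero]
  ring

lemma alignmentPDF_nonneg (J : ℝ) : 0 ≤ alignmentPDF J := by
  unfold alignmentPDF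
  split_ifs with h1 h2
  · obtain ⟨hle, hlt⟩ := h1
    have hJ2lt : J ^ 2 < 1 / 2 := by
      have := pow_lt_pow_left₀ hlt (abs_nonneg J) (n := 2) two_ne_zero
      rwa [sq_abs, inv_sqrt2_sq] at this
    have hJ2ge : 1 / 3 ≤ J ^ 2 := by
      have := pow_le_pow_left₀ inv_sqrt3_pos.le hle 2
      rwa [sq_abs, inv_sqrt3_sq] at this
    have hspos : 0 < Real.sqrt (1 - J ^ 2) := Real.sqrt_pos.2 (by nlinarith)
    have hsle : Real.sqrt (1 - J ^ 2) ≤ Real.sqrt 2 / Real.sqrt 3 := by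
      have h1 : Real.sqrt (1 - J ^ 2) ≤ Real.sqrt (2 / 3) :=
        Real.sqrt_le_sqrt (by nlinarith)
      rwa [Real.sqrt_div (by norm_num : (0:ℝ) ≤ 2) 3] at h1
    have hu : Real.sqrt 2 / 2 ≤ |J| / Real.sqrt (1 - J ^ 2) := by
      rw [div_le_div_iff₀ (by norm_num) hspos]
      have h2 : Real.sqrt 2 * Real.sqrt 2 = 2 := Real.mul_self_sqrt (by norm_num)
      calc Real.sqrt 2 * Real.sqrt (1 - J ^ 2)
          ≤ Real.sqrt 2 * (Real.sqrt 2 / Real.sqrt 3) :=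
            mul_le_mul_of_nonneg_left hsle (Real.sqrt_nonneg 2)
        _ = 2 / Real.sqrt 3 := by rw [← mul_div_assoc, h2]
        _ = (1 / Real.sqrt 3) * 2 := by ring
        _ ≤ |J| * 2 := by linarith
    have harc : Real.arccos (|J| / Real.sqrt (1 - J ^ 2)) ≤ Real.pi / 4 :=
      Real.arccos_le_pi_div_four.2 hu
    have h4pi : (0:ℝ) ≤ 4 / Real.pi := by positivity
    have hle1 : (4 / Real.pi) * Real.arccos (|J| / Real.sqrt (1 - J ^ 2)) ≤
        (4 / Real.pi) * (Real.pi / 4) := mul_le_mul_of_nonneg_left harc h4pi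
    have hval : (4 / Real.pi) * (Real.pi / 4) = 1 := by
      field_simp
    nlinarith
  · norm_num
  · exact le_refl 0

lemma alignmentPDF_le (J : ℝ) : alignmentPDF J ≤ 3 / 2 := by
  unfold alignmentPDF
  split_ifs with h1 h2
  · have h4pi : (0:ℝ) ≤ 4 / Real.pi := by positivity
    have := mul_nonneg h4pi (Real.arccos_nonneg (|J| / Real.sqrt (1 - J ^ 2)))
    nlinarith
  · exact le_refl _
  · norm_num

lemma alignmentPDF_measurable : Measurable alignmentPDF := by
  unfold alignmentPDF
  have hm : Measurable fun J : ℝ => |J| / Real.sqrt (1 - J ^ 2) :=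
    continuous_abs.measurable.div
      ((Real.continuous_sqrt.comp (by continuity)).measurable)
  have hb1 : Measurable fun J : ℝ =>
      (3 / 2 : ℝ) * (1 - (4 / Real.pi) * Real.arccos (|J| / Real.sqrt (1 - J ^ 2))) :=
    (measurable_const.sub
      ((Real.continuous_arccos.measurable.comp hm).const_mul _)).const_mul _
  have hs1 : MeasurableSet {J : ℝ | 1 / Real.sqrt 3 ≤ |J| ∧ |J| < 1 / Real.sqrt 2} := by
    have : {J : ℝ | 1 / Real.sqrt 3 ≤ |J| ∧ |J| < 1 / Real.sqrt 2} =
        {J : ℝ | 1 / Real.sqrt 3 ≤ |J|} ∩ {J : ℝ | |J| < 1 / Real.sqrt 2} := rfl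
    rw [this]
    exact (measurableSet_le measurable_const continuous_abs.measurable).inter
      (measurableSet_lt continuous_abs.measurable measurable_const)
  have hs2 : MeasurableSet {J : ℝ | 1 / Real.sqrt 2 ≤ |J| ∧ |J| ≤ 1} := by
    have : {J : ℝ | 1 / Real.sqrt 2 ≤ |J| ∧ |J| ≤ 1} =
        {J : ℝ | 1 / Real.sqrt 2 ≤ |J|} ∩ {J : ℝ | |J| ≤ 1} := rfl
    rw [this]
    exact (measurableSet_le measurable_const continuous_abs.measurable).inter
      (measurableSet_le continuous_abs.measurable measurable_const)
  exact Measurable.ite hs1 hb1 (Measurable.ite hs2 measurable_const measurable_const)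

lemma alignmentPDF_zero_of_abs_gt {J : ℝ} (h : 1 < |J|) : alignmentPDF J = 0 := by
  unfold alignmentPDF
  rw [if_neg, if_neg]
  · rintro ⟨-, h2⟩
    linarith [inv_sqrt2_le_one]
  · rintro ⟨-, h2⟩
    linarith [inv_sqrt2_le_one]

lemma alignmentPDF_integrable : Integrable alignmentPDF := by
  have hind : Integrable ((Set.Icc (-1:ℝ) 1).indicator fun _ => (3/2 : ℝ)) :=
    (integrable_indicator_iff measurableSet_Icc).2
      (integrableOn_const measure_Icc_lt_top.ne)
  refine hind.mono' alignmentPDF_measurable.aestronglyMeasurable (ae_of_all _ fun x => ?_)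
  rw [Real.norm_eq_abs, abs_of_nonneg (alignmentPDF_nonneg x)]
  by_cases hx : x ∈ Set.Icc (-1:ℝ) 1
  · rw [Set.indicator_of_mem hx]
    exact alignmentPDF_le x
  · rw [Set.indicator_of_notMem hx]
    rw [Set.mem_Icc, ← abs_le, not_le] at hx
    rw [alignmentPDF_zero_of_abs_gt hx]

lemma alignmentPDF_neg (x : ℝ) : alignmentPDF (-x) = alignmentPDF x := by
  unfold alignmentPDF
  rw [abs_neg, neg_pow]
  simp [neg_sq]

theorem alignmentPDF_is_pdf :
    (∀ J : ℝ, 0 ≤ alignmentPDF J) ∧ ∫ J : ℝ, alignmentPDF J = 1 := by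
  refine ⟨alignmentPDF_nonneg, ?_⟩
  have hInt := alignmentPDF_integrable
  have hii : ∀ u v : ℝ, IntervalIntegrable alignmentPDF volume u v :=
    fun u v => hInt.intervalIntegrable
  -- reduce to the interval integral over [-1, 1]
  have hsupp : Function.support alignmentPDF ⊆ Set.Icc (-1:ℝ) 1 := by
    intro x hx
    by_contra hmem
    rw [Set.mem_Icc, ← abs_le, not_le] at hmem
    exact hx (alignmentPDF_zero_of_abs_gt hmem)
  have e1 : ∫ J : ℝ, alignmentPDF J = ∫ J in Set.Icc (-1:ℝ) 1, alignmentPDF J := by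
    rw [← MeasureTheory.integral_indicator measurableSet_Icc,
      Set.indicator_eq_self.2 hsupp]
  have e2 : ∫ J in Set.Icc (-1:ℝ) 1, alignmentPDF J =
      ∫ J in (-1:ℝ)..1, alignmentPDF J := by
    rw [intervalIntegral.integral_of_le (by norm_num : (-1:ℝ) ≤ 1),
      MeasureTheory.integral_Icc_eq_integral_Ioc]
  -- symmetry
  have hneg : ∫ J in (-1:ℝ)..0, alignmentPDF J = ∫ J in (0:ℝ)..1, alignmentPDF J := by
    have h := intervalIntegral.integral_comp_neg (a := (0:ℝ)) (b := 1) alignmentPDF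
    simp only [alignmentPDF_neg, neg_zero] at h
    rw [← h]
  -- splitting points
  have hsplit1 : (∫ J in (-1:ℝ)..0, alignmentPDF J) + (∫ J in (0:ℝ)..1, alignmentPDF J) =
      ∫ J in (-1:ℝ)..1, alignmentPDF J :=
    intervalIntegral.integral_add_adjacent_intervals (hii _ _) (hii _ _)
  have hsplit2 : (∫ J in (0:ℝ)..(1 / Real.sqrt 3), alignmentPDF J) +
      (∫ J in (1 / Real.sqrt 3 : ℝ)..(1 / Real.sqrt 2), alignmentPDF J) =
      ∫ J in (0:ℝ)..(1 / Real.sqrt 2), alignmentPDF J :=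
    intervalIntegral.integral_add_adjacent_intervals (hii _ _) (hii _ _)
  have hsplit3 : (∫ J in (0:ℝ)..(1 / Real.sqrt 2), alignmentPDF J) +
      (∫ J in (1 / Real.sqrt 2 : ℝ)..1, alignmentPDF J) =
      ∫ J in (0:ℝ)..1, alignmentPDF J :=
    intervalIntegral.integral_add_adjacent_intervals (hii _ _) (hii _ _)
  -- value on [0, 1/√3]
  have hA : ∫ J in (0:ℝ)..(1 / Real.sqrt 3), alignmentPDF J = 0 := by
    rw [intervalIntegral.integral_congr (g := fun _ => (0:ℝ)) ?_]
    · simp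
    · rw [Set.uIcc_of_le inv_sqrt3_pos.le]
      intro J hJ
      have habs : |J| = J := abs_of_nonneg hJ.1
      rcases eq_or_lt_of_le hJ.2 with hJa | hJa
      · show alignmentPDF J = 0
        unfold alignmentPDF
        rw [if_pos ⟨by rw [habs]; exact le_of_eq hJa.symm,
          by rw [habs, hJa]; exact inv_sqrt3_lt_inv_sqrt2⟩]
        rw [habs, hJa, ratio_at_a, arccos_sqrt2_div_two]
        have hπ : Real.pi ≠ 0 := Real.pi_ne_zero
        field_simp
        norm_num
      · show alignmentPDF J = 0
        unfold alignmentPDF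
        have hn1 : ¬(1 / Real.sqrt 3 ≤ |J| ∧ |J| < 1 / Real.sqrt 2) := by
          rintro ⟨h, -⟩
          rw [habs] at h
          linarith
        have hn2 : ¬(1 / Real.sqrt 2 ≤ |J| ∧ |J| ≤ 1) := by
          rintro ⟨h, -⟩
          rw [habs] at h
          linarith [inv_sqrt3_lt_inv_sqrt2]
        rw [if_neg hn1, if_neg hn2]
  -- value on [1/√3, 1/√2] via FTC
  have hB : ∫ J in (1 / Real.sqrt 3 : ℝ)..(1 / Real.sqrt 2), alignmentPDF J =
      (3 / 2) * (1 / Real.sqrt 2) - 1 := by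
    have hne : ∀ J ∈ Set.Icc (1 / Real.sqrt 3 : ℝ) (1 / Real.sqrt 2),
        Real.sqrt (1 - J ^ 2) ≠ 0 := by
      intro J hJ
      have h0 : 0 ≤ J := le_trans inv_sqrt3_pos.le hJ.1
      have : J ^ 2 ≤ 1 / 2 := by
        have := pow_le_pow_left₀ h0 hJ.2 2
        rwa [inv_sqrt2_sq] at this
      exact (Real.sqrt_pos.2 (by nlinarith)).ne'
    have hcont_s : Continuous fun J : ℝ => Real.sqrt (1 - J ^ 2) :=
      Real.continuous_sqrt.comp (by continuity)
    have hcont_u : ContinuousOn (fun J : ℝ => J / Real.sqrt (1 - J ^ 2))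
        (Set.Icc (1 / Real.sqrt 3 : ℝ) (1 / Real.sqrt 2)) :=
      continuousOn_id.div hcont_s.continuousOn hne
    have hcont_g : ContinuousOn
        (fun J : ℝ => (3 / 2) * (1 - (4 / Real.pi) *
          Real.arccos (J / Real.sqrt (1 - J ^ 2))))
        (Set.Icc (1 / Real.sqrt 3 : ℝ) (1 / Real.sqrt 2)) :=
      (continuousOn_const.sub ((Real.continuous_arccos.comp_continuousOn
        hcont_u).const_smul (4 / Real.pi))).const_smul (3 / 2 : ℝ)
    have hcont_F : ContinuousOn antiF
        (Set.Icc (1 / Real.sqrt 3 : ℝ) (1 / Real.sqrt 2)) := by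
      unfold antiF
      exact (continuousOn_id.sub (((continuousOn_id.mul
        (Real.continuous_arccos.comp_continuousOn hcont_u)).sub
        ((Real.continuous_arctan.comp (Real.continuous_sqrt.comp
          (by continuity))).continuousOn)).const_smul (4 / Real.pi))).const_smul (3 / 2 : ℝ)
    have hderiv : ∀ x ∈ Set.Ioo (1 / Real.sqrt 3 : ℝ) (1 / Real.sqrt 2),
        HasDerivAt antiF
          ((fun J : ℝ => (3 / 2) * (1 - (4 / Real.pi) *
            Real.arccos (J / Real.sqrt (1 - J ^ 2)))) x) x := by
      intro x hx
      have h0 : 0 ≤ x := le_trans inv_sqrt3_pos.le hx.1.le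
      refine hasDerivAt_antiF ?_
      have := pow_lt_pow_left₀ hx.2 h0 (n := 2) two_ne_zero
      rwa [inv_sqrt2_sq] at this
    have hig : IntervalIntegrable
        (fun J : ℝ => (3 / 2) * (1 - (4 / Real.pi) *
          Real.arccos (J / Real.sqrt (1 - J ^ 2)))) volume
        (1 / Real.sqrt 3) (1 / Real.sqrt 2) := by
      apply ContinuousOn.intervalIntegrable
      rwa [Set.uIcc_of_le inv_sqrt3_lt_inv_sqrt2.le]
    have heqon : Set.EqOn alignmentPDF
        (fun J : ℝ => (3 / 2) * (1 - (4 / Real.pi) *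
          Real.arccos (J / Real.sqrt (1 - J ^ 2))))
        (Set.uIcc (1 / Real.sqrt 3 : ℝ) (1 / Real.sqrt 2)) := by
      rw [Set.uIcc_of_le inv_sqrt3_lt_inv_sqrt2.le]
      intro J hJ
      have hJpos : 0 < J := lt_of_lt_of_le inv_sqrt3_pos hJ.1
      have habs : |J| = J := abs_of_pos hJpos
      show alignmentPDF J = _
      unfold alignmentPDF
      by_cases hJb : J < 1 / Real.sqrt 2
      · rw [if_pos ⟨by rw [habs]; exact hJ.1, by rw [habs]; exact hJb⟩, habs]
      · have hJb' : J = 1 / Real.sqrt 2 := le_antisymm hJ.2 (not_lt.1 hJb)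
        rw [if_neg (by rintro ⟨-, h⟩; rw [habs] at h; exact hJb h),
          if_pos ⟨by rw [habs]; exact le_of_eq hJb'.symm,
            by rw [habs, hJb']; exact inv_sqrt2_le_one⟩]
        rw [hJb']
        norm_num [ratio_at_b, Real.arccos_one]
    rw [intervalIntegral.integral_congr heqon,
      intervalIntegral.integral_eq_sub_of_hasDerivAt_of_le
        inv_sqrt3_lt_inv_sqrt2.le hcont_F hderiv hig,
      antiF_at_a, antiF_at_b]
  -- value on [1/√2, 1]
  have hC : ∫ J in (1 / Real.sqrt 2 : ℝ)..1, alignmentPDF J =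
      (1 - 1 / Real.sqrt 2) * (3 / 2) := by
    rw [intervalIntegral.integral_congr (g := fun _ => (3/2 : ℝ)) ?_]
    · rw [intervalIntegral.integral_const, smul_eq_mul]
    · rw [Set.uIcc_of_le inv_sqrt2_le_one]
      intro J hJ
      have hJpos : 0 < J := lt_of_lt_of_le (lt_trans inv_sqrt3_pos
        inv_sqrt3_lt_inv_sqrt2) hJ.1
      have habs : |J| = J := abs_of_pos hJpos
      show alignmentPDF J = _
      unfold alignmentPDF
      rw [if_neg (by rintro ⟨-, h⟩; rw [habs] at h; linarith [hJ.1]),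
        if_pos ⟨by rw [habs]; exact hJ.1, by rw [habs]; exact hJ.2⟩]
  rw [e1, e2, ← hsplit1, hneg, ← hsplit3, ← hsplit2, hA, hB, hC]
  ring
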